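/- Let M, M₁ be real constants and let t, t₁, t₂ : J → ℝ be differentiable functions on an open interval J ⊆ ℝ such that for all x ∈ J: t(x) ≠ x, t₁(x) ≠ x, 1 + M·t(x) ≠ 0, 1 + M·t₁(x) ≠ 0, 1 + M₁·t₁(x) ≠ 0, t₁(x) ≠ t₂(x), and the chain equations t₁' = ((1 + M·t₁)(t₁ − x))/((1 + M·t)(t − x))·t' and t₂' = ((1 + M₁·t₂)(t₂ − x))/((1 + M₁·t₁)(t₁ − x))·t₁' hold. Then the function F(x) = (1 + M₁·t₂(x))(t₁(x) − t(x)) / ((1 + M·t(x))(t₁(x) − t₂(x))) has zero derivative at every point of J. In other words, F = (1 + t₂M(n+1))(t₁ − t)/((1 + tM(n))(t₁ − t₂)) is an x-integral of the chain t_{1x} = ((1 + t₁M(n))(t₁ − x))/((1 + tM(n))(t − x)) t_x. -/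

import Mathlib

/-- `F = (1 + t₂ M(n+1))(t₁ - t)/((1 + t M(n))(t₁ - t₂))` is an x-integral
of the chain `t_{1x} = ((1 + t₁ M(n))(t₁ - x))/((1 + t M(n))(t - x)) t_x`. -/
theorem stmt_10 (M M₁ : ℝ) (J : Set ℝ) (hJ : IsOpen J) (hJc : J.OrdConnected)
    (t t₁ t₂ : ℝ → ℝ)
    (ht : ∀ x ∈ J, DifferentiableAt ℝ t x)
    (ht₁ : ∀ x ∈ J, DifferentiableAt ℝ t₁ x)
    (ht₂ : ∀ x ∈ J, DifferentiableAt ℝ t₂ x)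
    (htx : ∀ x ∈ J, t x ≠ x)
    (ht₁x : ∀ x ∈ J, t₁ x ≠ x)
    (hMt : ∀ x ∈ J, 1 + M * t x ≠ 0)
    (hMt₁ : ∀ x ∈ J, 1 + M * t₁ x ≠ 0)
    (hM₁t₁ : ∀ x ∈ J, 1 + M₁ * t₁ x ≠ 0)
    (ht₁t₂ : ∀ x ∈ J, t₁ x ≠ t₂ x)
    (hchain1 : ∀ x ∈ J, deriv t₁ x
      = ((1 + M * t₁ x) * (t₁ x - x)) / ((1 + M * t x) * (t x - x)) * deriv t x)
    (hchain2 : ∀ x ∈ J, deriv t₂ x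
      = ((1 + M₁ * t₂ x) * (t₂ x - x)) / ((1 + M₁ * t₁ x) * (t₁ x - x)) * deriv t₁ x) :
    ∀ x ∈ J, deriv (fun y =>
      (1 + M₁ * t₂ y) * (t₁ y - t y) / ((1 + M * t y) * (t₁ y - t₂ y))) x = 0 := by
  intro x hx
  have h0 : HasDerivAt t (deriv t x) x := (ht x hx).hasDerivAt
  have h1 : HasDerivAt t₁ (deriv t₁ x) x := (ht₁ x hx).hasDerivAt
  have h2 : HasDerivAt t₂ (deriv t₂ x) x := (ht₂ x hx).hasDerivAt
  have hnum : HasDerivAt (fun y => (1 + M₁ * t₂ y) * (t₁ y - t y))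
      ((M₁ * deriv t₂ x) * (t₁ x - t x) + (1 + M₁ * t₂ x) * (deriv t₁ x - deriv t x)) x :=
    (((h2.const_mul M₁).const_add 1).mul (h1.sub h0))
  have hden : HasDerivAt (fun y => (1 + M * t y) * (t₁ y - t₂ y))
      ((M * deriv t x) * (t₁ x - t₂ x) + (1 + M * t x) * (deriv t₁ x - deriv t₂ x)) x :=
    (((h0.const_mul M).const_add 1).mul (h1.sub h2))
  have hd0 : (1 + M * t x) * (t₁ x - t₂ x) ≠ 0 :=
    mul_ne_zero (hMt x hx) (sub_ne_zero.2 (ht₁t₂ x hx))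
  have hF : HasDerivAt (fun y => (1 + M₁ * t₂ y) * (t₁ y - t y) / ((1 + M * t y) * (t₁ y - t₂ y))) _ x :=
    hnum.div hden hd0
  rw [hF.deriv]
  rw [div_eq_zero_iff]
  left
  have e1 := hchain1 x hx
  have e2 := hchain2 x hx
  rw [e1] at e2 ⊢
  rw [e2]
  have hne1 : (1 + M * t x) * (t x - x) ≠ 0 :=
    mul_ne_zero (hMt x hx) (sub_ne_zero.2 (htx x hx))
  have hne2 : (1 + M₁ * t₁ x) * (t₁ x - x) ≠ 0 :=
    mul_ne_zero (hM₁t₁ x hx) (sub_ne_zero.2 (ht₁x x hx))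
  field_simp [hMt x hx, hM₁t₁ x hx, sub_ne_zero.2 (htx x hx), sub_ne_zero.2 (ht₁x x hx)]
  ring
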